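/- In the free Lie algebra on x, y over a field of characteristic 0 with δ(x)=0, δ(y)=x: if α·[y,x,y,y] is a constant of δ (i.e., δ(α[y,x,y,y]) = 0 with left-normed brackets), then α = 0. -/

import Mathlib

theorem degree_four_monomial_not_constant {K : Type*} [Field K] [CharZero K]
    (δ : FreeLieAlgebra K (Fin 2) →ₗ[K] FreeLieAlgebra K (Fin 2))
    (hδ : ∀ a b : FreeLieAlgebra K (Fin 2), δ ⁅a, b⁆ = ⁅δ a, b⁆ + ⁅a, δ b⁆)
    (hx : δ (FreeLieAlgebra.of K (0 : Fin 2)) = 0)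
    (hy : δ (FreeLieAlgebra.of K (1 : Fin 2)) = FreeLieAlgebra.of K (0 : Fin 2))
    (α : K)
    (h : δ (α • ⁅⁅⁅FreeLieAlgebra.of K (1 : Fin 2), FreeLieAlgebra.of K (0 : Fin 2)⁆,
      FreeLieAlgebra.of K (1 : Fin 2)⁆, FreeLieAlgebra.of K (1 : Fin 2)⁆) = 0) :
    α = 0 := by
  rw [map_smul] at h
  simp only [hδ, hx, hy] at h
  letI : LieRing (FreeAlgebra K (Fin 2)) := LieRing.ofAssociativeRing
  have h2 := congrArg (FreeLieAlgebra.lift K (fun i : Fin 2 => FreeAlgebra.ι K i)) h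
  simp only [LieHom.map_lie,
    map_smul, map_add, map_zero,
    FreeLieAlgebra.lift_of_apply, Ring.lie_def] at h2
  have h3 := congrArg (FreeAlgebra.equivMonoidAlgebraFreeMonoid (R := K) (X := Fin 2)) h2
  simp only [map_smul, map_add, map_sub, map_mul, map_zero,
    FreeAlgebra.equivMonoidAlgebraFreeMonoid, AlgEquiv.ofAlgHom_apply,
    FreeAlgebra.lift_ι_apply, MonoidAlgebra.of_apply,
    mul_zero, zero_mul, sub_zero, zero_sub, add_zero, zero_add, sub_self,
    MonoidAlgebra.single_mul_single, one_mul, mul_one, sub_mul, mul_sub] at h3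
  rcases smul_eq_zero.mp h3 with hα | hV
  · exact hα
  · exfalso
    have h4 := congrArg (fun v => Finsupp.lapply (M := K) (R := K)
      (FreeMonoid.of 0 * FreeMonoid.of 0 * FreeMonoid.of 1 * FreeMonoid.of 1) v.coeff) hV
    simp only [MonoidAlgebra.coeff_add, MonoidAlgebra.coeff_sub, MonoidAlgebra.coeff_zero,
      MonoidAlgebra.coeff_single, map_add, map_sub, map_zero] at h4
    have tl : ∀ a b : FreeMonoid (Fin 2), a.toList ≠ b.toList → a ≠ b :=
      fun a b hne hc => hne (congrArg FreeMonoid.toList hc)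
    have n1 : FreeMonoid.of (1:Fin 2) * (FreeMonoid.of 0 * (FreeMonoid.of 0 * FreeMonoid.of 1))
        ≠ FreeMonoid.of 0 * (FreeMonoid.of 0 * (FreeMonoid.of 1 * FreeMonoid.of 1)) := by
      apply tl; simp
    have n2 : FreeMonoid.of (0:Fin 2) * (FreeMonoid.of 1 * (FreeMonoid.of 0 * FreeMonoid.of 1))
        ≠ FreeMonoid.of 0 * (FreeMonoid.of 0 * (FreeMonoid.of 1 * FreeMonoid.of 1)) := by
      apply tl; simp
    have n3 : FreeMonoid.of (1:Fin 2) * (FreeMonoid.of 1 * (FreeMonoid.of 0 * FreeMonoid.of 0))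
        ≠ FreeMonoid.of 0 * (FreeMonoid.of 0 * (FreeMonoid.of 1 * FreeMonoid.of 1)) := by
      apply tl; simp
    have n4 : FreeMonoid.of (1:Fin 2) * (FreeMonoid.of 0 * (FreeMonoid.of 1 * FreeMonoid.of 0))
        ≠ FreeMonoid.of 0 * (FreeMonoid.of 0 * (FreeMonoid.of 1 * FreeMonoid.of 1)) := by
      apply tl; simp
    have n5 : FreeMonoid.of (0:Fin 2) * (FreeMonoid.of 1 * (FreeMonoid.of 1 * FreeMonoid.of 0))
        ≠ FreeMonoid.of 0 * (FreeMonoid.of 0 * (FreeMonoid.of 1 * FreeMonoid.of 1)) := by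
      apply tl; simp
    simp only [mul_assoc] at h4
    simp [Finsupp.single_apply, n1, n2, n3, n4, n5] at h4
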